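/- There is no partial binary operator ∧ on WMTS such that for all WMTS S and all deterministic WMTS S₁, S₂: (1) whenever S₁∧S₂ is defined, S₁∧S₂ ≤_m S₁ and S₁∧S₂ ≤_m S₂; (2) whenever S ≤_m S₁ and S ≤_m S₂, then S₁∧S₂ is defined and S ≤_m S₁∧S₂; (3) d_m(S,S₁∧S₂) is bounded by a function of d_m(S,S₁) and d_m(S,S₂), i.e., there exists a function f : [0,∞)×[0,∞) → [0,∞) such that whenever S₁∧S₂ is defined and d_m(S,S₁) and d_m(S,S₂) are finite, then d_m(S,S₁∧S₂) ≤ f(d_m(S,S₁), d_m(S,S₂)). In particular, for any ∧ satisfying (1) and (2), the witnessing systems over one action a — S with single may-transition labeled (a,[1,2]), S₁ with single may-transition labeled (a,[0,1]), S₂ with single may-transition labeled (a,[2,3]) — satisfy d_m(S,S₁) = d_m(S,S₂) = 1 and d_m(S,S₁∧S₂) = ∞. -/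

import Mathlib

open scoped ENNReal

namespace WMTSQuant

/-- A closed extended-integer interval `[lo, hi]` with `lo ∈ ℤ ∪ {-∞}`,
`hi ∈ ℤ ∪ {∞}` and `lo ≤ hi`. -/
structure EInterval where
  lo : EReal
  hi : EReal
  lo_mem : lo = ⊥ ∨ ∃ n : ℤ, lo = ((n : ℝ) : EReal)
  hi_mem : hi = ⊤ ∨ ∃ n : ℤ, hi = ((n : ℝ) : EReal)
  lo_le_hi : lo ≤ hi

/-- Specification labels 𝕂 = Σ × 𝕀. -/
abbrev SLabel (Act : Type) := Act × EInterval

/-- The refinement order ⊑ on specification labels. -/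
def LabelLE {Act : Type} (k k' : SLabel Act) : Prop :=
  k.1 = k'.1 ∧ k'.2.lo ≤ k.2.lo ∧ k.2.hi ≤ k'.2.hi

/-- Implementation labels: singleton integer intervals. -/
def IsImpLabel {Act : Type} (k : SLabel Act) : Prop :=
  ∃ n : ℤ, k.2.lo = ((n : ℝ) : EReal) ∧ k.2.hi = ((n : ℝ) : EReal)

/-- Truncation of an extended real to `[0,∞]`. -/
noncomputable def erealToNNE (x : EReal) : ℝ≥0∞ :=
  if x = ⊤ then ⊤ else ENNReal.ofReal x.toReal

open Classical in
/-- The label distance d_𝕂. -/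
noncomputable def dK {Act : Type} (k ℓ : SLabel Act) : ℝ≥0∞ :=
  if k.1 = ℓ.1 then erealToNNE (max (ℓ.2.lo - k.2.lo) (max (k.2.hi - ℓ.2.hi) 0)) else ⊤

/-- Weighted modal transition systems. -/
structure WMTS (Act : Type) where
  State : Type
  init : State
  may : State → SLabel Act → State → Prop
  must : State → SLabel Act → State → Prop
  must_may : ∀ s k s', must s k s' → ∃ ℓ, LabelLE k ℓ ∧ may s ℓ s'

variable {Act : Type}

/-- Implementations: `must = may`, all labels singleton integer intervals. -/
def WMTS.IsImplementation (S : WMTS Act) : Prop :=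
  (∀ s k s', S.may s k s' ↔ S.must s k s') ∧
    ∀ s k s', S.must s k s' → IsImpLabel k

/-- (Boolean) modal refinement `S₁ ≤ₘ S₂`. -/
def Refines (S₁ S₂ : WMTS Act) : Prop :=
  ∃ R : S₁.State → S₂.State → Prop, R S₁.init S₂.init ∧
    ∀ s₁ s₂, R s₁ s₂ →
      (∀ k₁ t₁, S₁.may s₁ k₁ t₁ →
        ∃ k₂ t₂, S₂.may s₂ k₂ t₂ ∧ LabelLE k₁ k₂ ∧ R t₁ t₂) ∧
      (∀ k₂ t₂, S₂.must s₂ k₂ t₂ →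
        ∃ k₁ t₁, S₁.must s₁ k₁ t₁ ∧ LabelLE k₁ k₂ ∧ R t₁ t₂)

/-- Implementation semantics ⟦S⟧. -/
def Impl (S : WMTS Act) : Set (WMTS Act) :=
  {I | I.IsImplementation ∧ Refines I S}

/-- The endofunction whose least fixed point is the modal refinement distance. -/
noncomputable def dmF (lam : ℝ≥0∞) (S₁ S₂ : WMTS Act) :
    (S₁.State → S₂.State → ℝ≥0∞) →o (S₁.State → S₂.State → ℝ≥0∞) where
  toFun f := fun s₁ s₂ =>
    max
      (⨆ k₁, ⨆ t₁, ⨆ _ : S₁.may s₁ k₁ t₁,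
        ⨅ k₂, ⨅ t₂, ⨅ _ : S₂.may s₂ k₂ t₂, dK k₁ k₂ + lam * f t₁ t₂)
      (⨆ k₂, ⨆ t₂, ⨆ _ : S₂.must s₂ k₂ t₂,
        ⨅ k₁, ⨅ t₁, ⨅ _ : S₁.must s₁ k₁ t₁, dK k₁ k₂ + lam * f t₁ t₂)
  monotone' := by
    intro f g hfg s₁ s₂
    dsimp only
    gcongr with k₁ t₁ h k₂ t₂ h' k₂ t₂ h k₁ t₁ h' <;> exact hfg _ _

/-- The modal refinement distance between states. -/
noncomputable def dm (lam : ℝ≥0∞) (S₁ S₂ : WMTS Act) :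
    S₁.State → S₂.State → ℝ≥0∞ :=
  OrderHom.lfp (dmF lam S₁ S₂)

/-- The modal refinement distance between systems. -/
noncomputable def dmInit (lam : ℝ≥0∞) (S₁ S₂ : WMTS Act) : ℝ≥0∞ :=
  dm lam S₁ S₂ S₁.init S₂.init

/-- The endofunction whose least fixed point is the implementation distance. -/
noncomputable def diF (lam : ℝ≥0∞) (I₁ I₂ : WMTS Act) :
    (I₁.State → I₂.State → ℝ≥0∞) →o (I₁.State → I₂.State → ℝ≥0∞) where
  toFun f := fun i₁ i₂ =>
    max
      (⨆ k₁, ⨆ j₁, ⨆ _ : I₁.must i₁ k₁ j₁,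
        ⨅ k₂, ⨅ j₂, ⨅ _ : I₂.must i₂ k₂ j₂, dK k₁ k₂ + lam * f j₁ j₂)
      (⨆ k₂, ⨆ j₂, ⨆ _ : I₂.must i₂ k₂ j₂,
        ⨅ k₁, ⨅ j₁, ⨅ _ : I₁.must i₁ k₁ j₁, dK k₁ k₂ + lam * f j₁ j₂)
  monotone' := by
    intro f g hfg i₁ i₂
    dsimp only
    gcongr with k₁ t₁ h k₂ t₂ h' k₂ t₂ h k₁ t₁ h' <;> exact hfg _ _

/-- The implementation distance between states of implementations. -/
noncomputable def di (lam : ℝ≥0∞) (I₁ I₂ : WMTS Act) :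
    I₁.State → I₂.State → ℝ≥0∞ :=
  OrderHom.lfp (diF lam I₁ I₂)

/-- The implementation distance between implementations. -/
noncomputable def diInit (lam : ℝ≥0∞) (I₁ I₂ : WMTS Act) : ℝ≥0∞ :=
  di lam I₁ I₂ I₁.init I₂.init

/-- The thorough refinement distance. -/
noncomputable def dt (lam : ℝ≥0∞) (S₁ S₂ : WMTS Act) : ℝ≥0∞ :=
  ⨆ I₁ ∈ Impl S₁, ⨅ I₂ ∈ Impl S₂, diInit lam I₁ I₂


/-- Pointwise sum of intervals. -/
noncomputable def EInterval.add (I J : EInterval) : EInterval where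
  lo := I.lo + J.lo
  hi := I.hi + J.hi
  lo_mem := by
    rcases I.lo_mem with h | ⟨n, h⟩
    · exact Or.inl (by rw [h, EReal.bot_add])
    · rcases J.lo_mem with h' | ⟨m, h'⟩
      · exact Or.inl (by rw [h', EReal.add_bot])
      · exact Or.inr ⟨n + m, by rw [h, h', ← EReal.coe_add]; norm_cast⟩
  hi_mem := by
    rcases I.hi_mem with h | ⟨n, h⟩
    · exact Or.inl (by rw [h, EReal.top_add_of_ne_bot]
                       rcases J.hi_mem with h' | ⟨m, h'⟩ <;> simp [h'])
    · rcases J.hi_mem with h' | ⟨m, h'⟩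
      · exact Or.inl (by rw [h', EReal.add_top_of_ne_bot]; simp [h])
      · exact Or.inr ⟨n + m, by rw [h, h', ← EReal.coe_add]; norm_cast⟩
  lo_le_hi := add_le_add I.lo_le_hi J.lo_le_hi

/-- Widening `I ± δ` of an interval. -/
noncomputable def EInterval.widen (I : EInterval) (δ : ℕ) : EInterval where
  lo := I.lo - ((δ : ℝ) : EReal)
  hi := I.hi + ((δ : ℝ) : EReal)
  lo_mem := by
    rcases I.lo_mem with h | ⟨n, h⟩
    · exact Or.inl (by rw [h, EReal.bot_sub])
    · exact Or.inr ⟨n - δ, by rw [h, ← EReal.coe_sub]; norm_cast⟩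
  hi_mem := by
    rcases I.hi_mem with h | ⟨n, h⟩
    · exact Or.inl (by rw [h, EReal.top_add_of_ne_bot]; exact EReal.coe_ne_bot _)
    · exact Or.inr ⟨n + δ, by rw [h, ← EReal.coe_add]; norm_cast⟩
  lo_le_hi := by
    refine le_trans ?_ (le_trans I.lo_le_hi ?_)
    · rw [sub_eq_add_neg]
      nth_rewrite 2 [show I.lo = I.lo + 0 by rw [add_zero]]
      refine add_le_add le_rfl ?_
      rw [← EReal.coe_neg, ← EReal.coe_zero, EReal.coe_le_coe_iff]
      simp
    · nth_rewrite 1 [show I.hi = I.hi + 0 by rw [add_zero]]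
      refine add_le_add le_rfl ?_
      rw [← EReal.coe_zero, EReal.coe_le_coe_iff]
      simp



/-- Symmetrization of a hemimetric. -/
noncomputable def symDist {α : Type*} (d : α → α → ℝ≥0∞) : α → α → ℝ≥0∞ :=
  fun x y => max (d x y) (d y x)

/-- Product distance. -/
noncomputable def prodDist {α β : Type*} (d : α → α → ℝ≥0∞) (e : β → β → ℝ≥0∞) :
    α × β → α × β → ℝ≥0∞ :=
  fun p q => d p.1 q.1 + e p.2 q.2

/-- (Sequential) compactness of a set with respect to an `ℝ≥0∞`-valued distance. -/
def CompactIn {α : Type*} (d : α → α → ℝ≥0∞) (A : Set α) : Prop :=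
  ∀ u : ℕ → α, (∀ n, u n ∈ A) →
    ∃ x ∈ A, ∃ φ : ℕ → ℕ, StrictMono φ ∧
      Filter.Tendsto (fun n => d x (u (φ n))) Filter.atTop (nhds 0)

/-- Compactly branching WMTS. -/
def CompactlyBranching (lam : ℝ≥0∞) (S : WMTS Act) : Prop :=
  ∀ s : S.State,
    CompactIn (prodDist (symDist (dm lam S S)) (symDist dK))
      {p : S.State × SLabel Act | S.may s p.2 p.1} ∧
    CompactIn (prodDist (symDist (dm lam S S)) (symDist dK))
      {p : S.State × SLabel Act | S.must s p.2 p.1}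

/-- Deterministic WMTS. -/
def Deterministic (S : WMTS Act) : Prop :=
  ∀ (s : S.State) (a : Act) (I₁ I₂ : EInterval) (t₁ t₂ : S.State),
    S.may s (a, I₁) t₁ → S.may s (a, I₂) t₂ → I₁ = I₂ ∧ t₁ = t₂

/-- `S'` is an ε-relaxation of `S`. -/
def Relaxation (lam ε : ℝ≥0∞) (S S' : WMTS Act) : Prop :=
  Refines S S' ∧ dmInit lam S' S ≤ ε

/-- The ε-extended implementation semantics ⟦S⟧⁺ᵉ. -/
def ImplExt (lam ε : ℝ≥0∞) (S : WMTS Act) : Set (WMTS Act) :=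
  {I | I.IsImplementation ∧ dmInit lam I S ≤ ε}

/-- The δ-widening S⁺δ of a WMTS. -/
noncomputable def WMTS.widen (S : WMTS Act) (δ : ℕ) : WMTS Act where
  State := S.State
  init := S.init
  may s k t := ∃ a I, S.may s (a, I) t ∧ k = (a, I.widen δ)
  must s k t := ∃ a I, S.must s (a, I) t ∧ k = (a, I.widen δ)
  must_may := by
    rintro s k t ⟨a, I, h, rfl⟩
    obtain ⟨ℓ, hle, hmay⟩ := S.must_may _ _ _ h
    refine ⟨(ℓ.1, ℓ.2.widen δ), ⟨hle.1, ?_, ?_⟩, ℓ.1, ℓ.2, hmay, rfl⟩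
    · exact EReal.sub_le_sub hle.2.1 le_rfl
    · exact add_le_add hle.2.2 le_rfl

/-- Definedness of label synchronization ⊕. -/
def OplusDefined (k ℓ : SLabel Act) : Prop := k.1 = ℓ.1

/-- Label synchronization ⊕ (adding the intervals). -/
noncomputable def oplus (k ℓ : SLabel Act) : SLabel Act :=
  (k.1, k.2.add ℓ.2)

/-- Definedness of label quotient ⊖ (equal actions, the difference interval is a
valid extended-integer interval). -/
def OminusDefined (k ℓ : SLabel Act) : Prop :=
  k.1 = ℓ.1 ∧ k.2.lo - ℓ.2.lo ≤ k.2.hi - ℓ.2.hi ∧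
    (k.2.lo - ℓ.2.lo = ⊥ ∨ ∃ n : ℤ, k.2.lo - ℓ.2.lo = ((n : ℝ) : EReal)) ∧
    (k.2.hi - ℓ.2.hi = ⊤ ∨ ∃ n : ℤ, k.2.hi - ℓ.2.hi = ((n : ℝ) : EReal))

/-- Label quotient ⊖. -/
noncomputable def ominus (k ℓ : SLabel Act) (h : OminusDefined k ℓ) : SLabel Act :=
  (k.1, ⟨k.2.lo - ℓ.2.lo, k.2.hi - ℓ.2.hi, h.2.2.1, h.2.2.2, h.2.1⟩)

/-- Structural composition S₁ ∥ S₂ (CSP-style synchronization, adding weights). -/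
noncomputable def par (S₁ S₂ : WMTS Act) : WMTS Act where
  State := S₁.State × S₂.State
  init := (S₁.init, S₂.init)
  may p k q := ∃ k₁ k₂, S₁.may p.1 k₁ q.1 ∧ S₂.may p.2 k₂ q.2 ∧
    OplusDefined k₁ k₂ ∧ k = oplus k₁ k₂
  must p k q := ∃ k₁ k₂, S₁.must p.1 k₁ q.1 ∧ S₂.must p.2 k₂ q.2 ∧
    OplusDefined k₁ k₂ ∧ k = oplus k₁ k₂
  must_may := by
    rintro p k q ⟨k₁, k₂, h₁, h₂, hd, rfl⟩
    obtain ⟨ℓ₁, hle₁, hmay₁⟩ := S₁.must_may _ _ _ h₁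
    obtain ⟨ℓ₂, hle₂, hmay₂⟩ := S₂.must_may _ _ _ h₂
    refine ⟨oplus ℓ₁ ℓ₂, ⟨?_, ?_, ?_⟩,
      ℓ₁, ℓ₂, hmay₁, hmay₂, by rw [OplusDefined, ← hle₁.1, ← hle₂.1]; exact hd, rfl⟩
    · exact hle₁.1
    · exact add_le_add hle₁.2.1 hle₂.2.1
    · exact add_le_add hle₁.2.2 hle₂.2.2

section Quotient

variable (S₁ S₂ : WMTS Act)

/-- May transitions of the (unpruned) quotient; `none` is the universal state u. -/
def qmay : Option (S₁.State × S₂.State) → SLabel Act → Option (S₁.State × S₂.State) → Prop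
  | some p, k, some q =>
      (∃ k₁ k₂, ∃ h : OminusDefined k₁ k₂,
        S₁.may p.1 k₁ q.1 ∧ S₂.may p.2 k₂ q.2 ∧ k = ominus k₁ k₂ h) ∨
      (∃ k₁ k₂, ∃ h : OminusDefined k₁ k₂,
        S₁.must p.1 k₁ q.1 ∧ S₂.must p.2 k₂ q.2 ∧ k = ominus k₁ k₂ h)
  | some p, k, none => ∀ k₂ t₂, S₂.may p.2 k₂ t₂ → ¬ OplusDefined k k₂
  | none, _, none => True
  | none, _, some _ => False

/-- Must transitions of the (unpruned) quotient. -/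
def qmust : Option (S₁.State × S₂.State) → SLabel Act → Option (S₁.State × S₂.State) → Prop
  | some p, k, some q =>
      ∃ k₁ k₂, ∃ h : OminusDefined k₁ k₂,
        S₁.must p.1 k₁ q.1 ∧ S₂.must p.2 k₂ q.2 ∧ k = ominus k₁ k₂ h
  | _, _, _ => False

/-- Inconsistent states of the quotient. -/
def QBad : Option (S₁.State × S₂.State) → Prop
  | some p => ∃ k₁ t₁, S₁.must p.1 k₁ t₁ ∧
      ∀ k₂ t₂, S₂.must p.2 k₂ t₂ → ¬ OminusDefined k₁ k₂
  | none => False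

/-- States removed by pruning: those that can reach an inconsistent state via
must transitions (reflexive-transitive closure of `pre`). -/
def QPruned (p : Option (S₁.State × S₂.State)) : Prop :=
  ∃ q, Relation.ReflTransGen (fun x y => ∃ k, qmust S₁ S₂ x k y) p q ∧ QBad S₁ S₂ q

/-- The quotient S₁ ⫽ S₂, defined whenever the initial state survives pruning. -/
noncomputable def quotient' (h : ¬ QPruned S₁ S₂ (some (S₁.init, S₂.init))) :
    WMTS Act where
  State := {p : Option (S₁.State × S₂.State) // ¬ QPruned S₁ S₂ p}
  init := ⟨some (S₁.init, S₂.init), h⟩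
  may p k q := qmay S₁ S₂ p.1 k q.1
  must p k q := qmust S₁ S₂ p.1 k q.1
  must_may := by
    rintro ⟨p, hp⟩ k ⟨q, hq⟩ hmust
    refine ⟨k, ⟨rfl, le_rfl, le_rfl⟩, ?_⟩
    cases p with
    | none => exact hmust.elim
    | some p =>
      cases q with
      | none => exact hmust.elim
      | some q => exact Or.inr hmust

end Quotient

/-- Formulae of the logic L. -/
inductive Formula (Act : Type) where
  | tt : Formula Act
  | ff : Formula Act
  | diam : SLabel Act → Formula Act → Formula Act
  | box : SLabel Act → Formula Act → Formula Act
  | and : Formula Act → Formula Act → Formula Act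
  | or : Formula Act → Formula Act → Formula Act

/-- Disjunction-free formulae. -/
def Formula.DisjFree : Formula Act → Prop
  | .tt => True
  | .ff => True
  | .diam _ φ => φ.DisjFree
  | .box _ φ => φ.DisjFree
  | .and φ ψ => φ.DisjFree ∧ ψ.DisjFree
  | .or _ _ => False

/-- Quantitative semantics ⟦φ⟧ : S → [0,∞] of the logic L. -/
noncomputable def sem (lam : ℝ≥0∞) (S : WMTS Act) : Formula Act → S.State → ℝ≥0∞
  | .tt, _ => 0
  | .ff, _ => ⊤
  | .and φ ψ, s => max (sem lam S φ s) (sem lam S ψ s)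
  | .or φ ψ, s => min (sem lam S φ s) (sem lam S ψ s)
  | .diam ℓ φ, s =>
      ⨅ k, ⨅ t, ⨅ _ : S.must s k t ∧ dK k ℓ ≠ ⊤, dK k ℓ + lam * sem lam S φ t
  | .box ℓ φ, s =>
      ⨆ k, ⨆ t, ⨆ _ : S.may s k t ∧ dK k ℓ ≠ ⊤, dK k ℓ + lam * sem lam S φ t

/-- ⟦φ⟧S = ⟦φ⟧s⁰. -/
noncomputable def semInit (lam : ℝ≥0∞) (S : WMTS Act) (φ : Formula Act) : ℝ≥0∞ :=
  sem lam S φ S.init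


/-- The extended-integer interval [x,y] for integers x ≤ y. -/
noncomputable def mkInterval (x y : ℤ) (h : x ≤ y) : EInterval :=
  ⟨((x : ℝ) : EReal), ((y : ℝ) : EReal), Or.inr ⟨x, rfl⟩, Or.inr ⟨y, rfl⟩,
    EReal.coe_le_coe_iff.mpr (by exact_mod_cast h)⟩

/-- A WMTS with one may-transition (labelled by action `a` and interval [x,y])
and no must-transitions. -/
noncomputable def single (a : Act) (x y : ℤ) (h : x ≤ y) : WMTS Act where
  State := Bool
  init := false
  may s k t := s = false ∧ t = true ∧ k = (a, mkInterval x y h)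
  must _ _ _ := False
  must_may := fun _ _ _ h => h.elim

/-- The empty WMTS: one state, no transitions. -/
def emptyW (Act : Type) : WMTS Act where
  State := Unit
  init := ()
  may _ _ _ := False
  must _ _ _ := False
  must_may := fun _ _ _ h => h.elim

lemma empty_refines_single (a : Act) (x y : ℤ) (h : x ≤ y) :
    Refines (emptyW Act) (single a x y h) := by
  refine ⟨fun _ _ => True, trivial, ?_⟩
  intro s₁ s₂ _
  constructor
  · intro k₁ t₁ h; exact h.elim
  · intro k₂ t₂ h; exact h.elim

lemma single_det (a : Act) (x y : ℤ) (h : x ≤ y) :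
    Deterministic (single a x y h) := by
  rintro s b I₁ I₂ t₁ t₂ ⟨_, rfl, h₁⟩ ⟨_, rfl, h₂⟩
  have h1 : I₁ = mkInterval x y h := congrArg Prod.snd h₁
  have h2 : I₂ = mkInterval x y h := congrArg Prod.snd h₂
  exact ⟨h1.trans h2.symm, rfl⟩

lemma dK_mk (a : Act) (x y x' y' : ℤ) (hxy : x ≤ y) (hxy' : x' ≤ y') :
    dK ((a, mkInterval x y hxy) : SLabel Act) (a, mkInterval x' y' hxy') =
      ENNReal.ofReal (max ((x' : ℝ) - x) (max ((y : ℝ) - y') 0)) := by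
  simp only [dK, if_pos rfl, mkInterval, erealToNNE]
  simp only [show ((((x' : ℝ)) : EReal) - ((x : ℝ) : EReal)) = (((x' : ℝ) - x : ℝ) : EReal) from
    (EReal.coe_sub _ _).symm]
  simp only [show ((((y : ℝ)) : EReal) - ((y' : ℝ) : EReal)) = (((y : ℝ) - y' : ℝ) : EReal) from
    (EReal.coe_sub _ _).symm]
  simp only [show ((0 : EReal) = ((0 : ℝ) : EReal)) from rfl]
  simp only [← EReal.coe_strictMono.monotone.map_max]
  rw [if_neg (EReal.coe_ne_top _), EReal.toReal_coe]
  simp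

/-- Distance between two `single` systems. -/
lemma dm_single (lam : ℝ≥0∞) (a : Act) (x y x' y' : ℤ) (hxy : x ≤ y) (hxy' : x' ≤ y') :
    dmInit lam (single a x y hxy) (single a x' y' hxy') =
      dK ((a, mkInterval x y hxy) : SLabel Act) (a, mkInterval x' y' hxy') := by
  set S := single (Act := Act) a x y hxy with hS
  set T := single (Act := Act) a x' y' hxy' with hT
  set c := dK ((a, mkInterval x y hxy) : SLabel Act) (a, mkInterval x' y' hxy') with hc
  have hfix : dmF lam S T (dm lam S T) = dm lam S T := OrderHom.map_lfp _
  set g : Bool → Bool → ℝ≥0∞ := fun s t => match s, t with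
    | true, _ => 0
    | false, true => ⊤
    | false, false => c with hg
  have hpre : dmF lam S T g ≤ g := by
    intro s t
    simp only [dmF, OrderHom.coe_mk]
    apply max_le
    · refine iSup_le fun k₁ => iSup_le fun t₁ => iSup_le fun hm => ?_
      obtain ⟨hs, rfl, rfl⟩ := hm
      subst hs
      cases t with
      | true => exact le_top
      | false =>
        refine iInf_le_of_le (a, mkInterval x' y' hxy')
          (iInf_le_of_le true (iInf_le_of_le ⟨rfl, rfl, rfl⟩ ?_))
        have h0 : g true false = 0 := rfl
        show dK _ _ + lam * g true false ≤ g false false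
        rw [h0, mul_zero, add_zero]
    · refine iSup_le fun k₂ => iSup_le fun t₂ => iSup_le fun hm => hm.elim
  have hub : dm lam S T false false ≤ c :=
    (OrderHom.lfp_le (dmF lam S T) hpre) false false
  have hlb : c ≤ dm lam S T false false := by
    have h2 := congrFun (congrFun hfix false) false
    rw [← h2]
    simp only [dmF, OrderHom.coe_mk]
    refine le_trans ?_ (le_max_left _ _)
    refine le_iSup_of_le (a, mkInterval x y hxy) ?_
    refine le_iSup_of_le true (le_iSup_of_le ⟨rfl, rfl, rfl⟩ ?_)
    refine le_iInf fun k₂ => le_iInf fun t₂ => le_iInf fun hm => ?_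
    obtain ⟨-, rfl, rfl⟩ := hm
    exact le_self_add
  exact le_antisymm hub hlb

/-- there is no conjunction operator on WMTS which is a lower
bound, is defined on common refinements, and whose distance is bounded by a
function of the component distances; moreover, for any operator satisfying
the first two conditions, the concrete witnesses (a,[1,2]), (a,[0,1]),
(a,[2,3]) have d_m(S,S₁) = d_m(S,S₂) = 1 and d_m(S, S₁∧S₂) = ∞. -/
theorem no_conjunction_operator {Act : Type} [Nonempty Act] (lam : ℝ≥0∞)
    (hlam0 : 0 < lam) (hlam1 : lam < 1) :
    (¬ ∃ conj : WMTS Act → WMTS Act → Option (WMTS Act),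
        (∀ S₁ S₂ C, Deterministic S₁ → Deterministic S₂ →
          conj S₁ S₂ = some C → Refines C S₁ ∧ Refines C S₂) ∧
        (∀ S S₁ S₂, Deterministic S₁ → Deterministic S₂ →
          Refines S S₁ → Refines S S₂ →
          ∃ C, conj S₁ S₂ = some C ∧ Refines S C) ∧
        (∃ f : ℝ≥0∞ → ℝ≥0∞ → ℝ≥0∞, (∀ x y, x < ⊤ → y < ⊤ → f x y < ⊤) ∧
          ∀ S S₁ S₂ C, Deterministic S₁ → Deterministic S₂ →
            conj S₁ S₂ = some C →
            dmInit lam S S₁ < ⊤ → dmInit lam S S₂ < ⊤ →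
            dmInit lam S C ≤ f (dmInit lam S S₁) (dmInit lam S S₂))) ∧
    (∀ conj : WMTS Act → WMTS Act → Option (WMTS Act),
      (∀ S₁ S₂ C, Deterministic S₁ → Deterministic S₂ →
        conj S₁ S₂ = some C → Refines C S₁ ∧ Refines C S₂) →
      (∀ S S₁ S₂, Deterministic S₁ → Deterministic S₂ →
        Refines S S₁ → Refines S S₂ →
        ∃ C, conj S₁ S₂ = some C ∧ Refines S C) →
      ∀ a : Act,
        dmInit lam (single a 1 2 (by norm_num)) (single a 0 1 (by norm_num)) = 1 ∧
        dmInit lam (single a 1 2 (by norm_num)) (single a 2 3 (by norm_num)) = 1 ∧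
        ∀ C, conj (single a 0 1 (by norm_num)) (single a 2 3 (by norm_num)) = some C →
          dmInit lam (single a 1 2 (by norm_num)) C = ⊤) := by
  have part2 : ∀ conj : WMTS Act → WMTS Act → Option (WMTS Act),
      (∀ S₁ S₂ C, Deterministic S₁ → Deterministic S₂ →
        conj S₁ S₂ = some C → Refines C S₁ ∧ Refines C S₂) →
      (∀ S S₁ S₂, Deterministic S₁ → Deterministic S₂ →
        Refines S S₁ → Refines S S₂ →
        ∃ C, conj S₁ S₂ = some C ∧ Refines S C) →
      ∀ a : Act,
        dmInit lam (single a 1 2 (by norm_num)) (single a 0 1 (by norm_num)) = 1 ∧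
        dmInit lam (single a 1 2 (by norm_num)) (single a 2 3 (by norm_num)) = 1 ∧
        ∀ C, conj (single a 0 1 (by norm_num)) (single a 2 3 (by norm_num)) = some C →
          dmInit lam (single a 1 2 (by norm_num)) C = ⊤ := by
    intro conj hlow _hdef a
    have hd1 : dmInit lam (single a 1 2 (by norm_num)) (single a 0 1 (by norm_num)) = 1 := by
      rw [dm_single lam a 1 2 0 1 (by norm_num) (by norm_num), dK_mk]
      norm_num
    have hd2 : dmInit lam (single a 1 2 (by norm_num)) (single a 2 3 (by norm_num)) = 1 := by
      rw [dm_single lam a 1 2 2 3 (by norm_num) (by norm_num), dK_mk]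
      norm_num
    refine ⟨hd1, hd2, ?_⟩
    intro C hC
    obtain ⟨href1, href2⟩ := hlow _ _ C (single_det a 0 1 (by norm_num))
      (single_det a 2 3 (by norm_num)) hC
    obtain ⟨R₁, hR₁₀, hR₁⟩ := href1
    obtain ⟨R₂, hR₂₀, hR₂⟩ := href2
    have hno : ∀ k t, ¬ C.may C.init k t := by
      intro k t hkt
      obtain ⟨k₂, t₂, hmay₂, hle₂, -⟩ := (hR₁ _ _ hR₁₀).1 k t hkt
      obtain ⟨k₃, t₃, hmay₃, hle₃, -⟩ := (hR₂ _ _ hR₂₀).1 k t hkt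
      obtain ⟨-, -, rfl⟩ := hmay₂
      obtain ⟨-, -, rfl⟩ := hmay₃
      have h1 : k.2.hi ≤ (((1 : ℤ) : ℝ) : EReal) := hle₂.2.2
      have h2 : (((2 : ℤ) : ℝ) : EReal) ≤ k.2.lo := hle₃.2.1
      have : (((2 : ℤ) : ℝ) : EReal) ≤ (((1 : ℤ) : ℝ) : EReal) :=
        le_trans h2 (le_trans k.2.lo_le_hi h1)
      rw [EReal.coe_le_coe_iff] at this
      norm_num at this
    set S := single (Act := Act) a 1 2 (by norm_num) with hSdef
    have hfix := congrFun (congrFun (OrderHom.map_lfp (dmF lam S C)) S.init) C.init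
    refine top_le_iff.mp ?_
    show ⊤ ≤ dm lam S C S.init C.init
    rw [dm, ← hfix]
    simp only [dmF, OrderHom.coe_mk]
    refine le_trans ?_ (le_max_left _ _)
    refine le_iSup_of_le (a, mkInterval 1 2 (by norm_num)) ?_
    refine le_iSup_of_le true (le_iSup_of_le ⟨rfl, rfl, rfl⟩ ?_)
    refine le_iInf fun k₂ => le_iInf fun t₂ => le_iInf fun h => absurd h (hno _ _)
  refine ⟨?_, fun conj h1 h2 => part2 conj h1 h2⟩
  rintro ⟨conj, hlow, hdef, f, hffin, hbound⟩
  obtain ⟨a⟩ := ‹Nonempty Act›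
  obtain ⟨hd1, hd2, htop⟩ := part2 conj hlow hdef a
  obtain ⟨C, hC, -⟩ := hdef (emptyW Act) (single a 0 1 (by norm_num))
    (single a 2 3 (by norm_num)) (single_det a 0 1 (by norm_num))
    (single_det a 2 3 (by norm_num)) (empty_refines_single a 0 1 (by norm_num))
    (empty_refines_single a 2 3 (by norm_num))
  have hb := hbound (single a 1 2 (by norm_num)) _ _ C
    (single_det a 0 1 (by norm_num)) (single_det a 2 3 (by norm_num)) hC
    (by rw [hd1]; exact ENNReal.one_lt_top) (by rw [hd2]; exact ENNReal.one_lt_top)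
  rw [htop C hC, hd1, hd2] at hb
  exact (hffin 1 1 ENNReal.one_lt_top ENNReal.one_lt_top).ne (top_le_iff.mp hb)

end WMTSQuant
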